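/- Let |·|_v be an absolute value on a field, let d ≥ 3 be an integer, and let P, Q be single-variable polynomials of degree exactly d over the field. Suppose L_6 > 1 and δ > 0 satisfy: min(|P(z)|_v, |Q(z)|_v) ≥ δ|z|_v^d whenever |z|_v ≥ L_6; and C ≥ 1 satisfies max(|P(z)|_v, |Q(z)|_v) ≤ C·max(1,|z|_v)^d for all z. Fix a, b nonzero, define A_0 = a, B_0 = b, A_{n+1} = P(A_n) + λ B_n, B_{n+1} = Q(B_n) + μ A_n, and M_n = max(|A_n|_v, |B_n|_v, 1). Then for any L > 1 there exist constants 0 < C_{16} ≤ C_{17} (depending only on v, L, δ, C, L_6) such that C_{16} ≤ M_{n+1}/M_n^d ≤ C_{17} for all n ≥ 1 and all λ, μ with max(|λ|_v, |μ|_v) ≤ L. -/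

import Mathlib

private lemma stmt9_aux {δ L M p z : ℝ} {d : ℕ} (hM : 1 ≤ M) (hML : 2 * L / δ ≤ M)
    (hδ : 0 < δ) (_hL : 0 ≤ L) (h2d : 2 ≤ d)
    (hp : δ * M ^ d ≤ p) (hz : p ≤ z + L * M) :
    δ / 2 * M ^ d ≤ z := by
  have hM0 : (0:ℝ) ≤ M := by linarith
  have h2L : 2 * L ≤ δ * M := by
    rw [div_le_iff₀ hδ] at hML; linarith
  have h1 : L * M ≤ δ / 2 * M ^ 2 := by nlinarith
  have h2 : M ^ 2 ≤ M ^ d := pow_le_pow_right₀ hM h2d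
  have h3 : δ / 2 * M ^ 2 ≤ δ / 2 * M ^ d :=
    mul_le_mul_of_nonneg_left h2 (by positivity)
  linarith

/-- Lemma 8.2, "again in a finite ball": for parameters `λ, μ` in a
bounded region `max(|λ|,|μ|) ≤ L`, the quantities `M_n = max(|A_n|,|B_n|,1)` satisfy
`C₁₆ ≤ M_{n+1}/M_n^d ≤ C₁₇` with constants independent of `λ, μ, n`. -/
theorem stmt9 {K : Type*} [Field K] (v : AbsoluteValue K ℝ)
    (d : ℕ) (hd : 3 ≤ d)
    (P Q : Polynomial K) (hPdeg : P.natDegree = d) (hQdeg : Q.natDegree = d)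
    (δ L6 C : ℝ) (hδ : 0 < δ) (hL6 : 1 < L6) (hC : 1 ≤ C)
    (hlow : ∀ z : K, L6 ≤ v z →
      δ * v z ^ d ≤ min (v (P.eval z)) (v (Q.eval z)))
    (hup : ∀ z : K, max (v (P.eval z)) (v (Q.eval z)) ≤ C * max 1 (v z) ^ d)
    (a b : K) (ha : a ≠ 0) (hb : b ≠ 0)
    (L : ℝ) (hL : 1 < L) :
    ∃ C16 C17 : ℝ, 0 < C16 ∧ C16 ≤ C17 ∧
      ∀ (l m : K) (A B : ℕ → K), v l ≤ L → v m ≤ L →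
        A 0 = a → B 0 = b →
        (∀ n, A (n + 1) = P.eval (A n) + l * B n) →
        (∀ n, B (n + 1) = Q.eval (B n) + m * A n) →
        ∀ n : ℕ, 1 ≤ n →
          C16 ≤ max (max (v (A (n + 1))) (v (B (n + 1)))) 1 /
              (max (max (v (A n)) (v (B n))) 1) ^ d ∧
          max (max (v (A (n + 1))) (v (B (n + 1)))) 1 /
              (max (max (v (A n)) (v (B n))) 1) ^ d ≤ C17 := by
  have hd0 : d ≠ 0 := by omega
  have h2d : 2 ≤ d := by omega
  have hL0 : (0:ℝ) ≤ L := by linarith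
  set L7 : ℝ := max L6 (2 * L / δ) with hL7def
  have hL7 : 1 < L7 := lt_of_lt_of_le hL6 (le_max_left _ _)
  refine ⟨min (L7 ^ d)⁻¹ (δ / 2), C + L, lt_min (by positivity) (by positivity), ?_, ?_⟩
  · have h1 : (1:ℝ) ≤ L7 ^ d := one_le_pow₀ hL7.le
    calc min (L7 ^ d)⁻¹ (δ / 2) ≤ (L7 ^ d)⁻¹ := min_le_left _ _
      _ ≤ 1 := inv_le_one_of_one_le₀ h1
      _ ≤ C + L := by linarith
  · intro l m A B hl hm hA0 hB0 hArec hBrec n hn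
    set Mn : ℝ := max (max (v (A n)) (v (B n))) 1 with hMndef
    set Mn1 : ℝ := max (max (v (A (n+1))) (v (B (n+1)))) 1 with hMn1def
    have hMn1le : (1:ℝ) ≤ Mn := le_max_right _ _
    have hMnpos : (0:ℝ) < Mn := lt_of_lt_of_le one_pos hMn1le
    have hMndpos : (0:ℝ) < Mn ^ d := pow_pos hMnpos d
    have hMnd1 : (1:ℝ) ≤ Mn ^ d := one_le_pow₀ hMn1le
    have hvA : v (A n) ≤ Mn := le_max_of_le_left (le_max_left _ _)
    have hvB : v (B n) ≤ Mn := le_max_of_le_left (le_max_right _ _)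
    have hself : Mn ≤ Mn ^ d := le_self_pow₀ hMn1le hd0
    -- upper bounds
    have hupA : v (A (n+1)) ≤ (C + L) * Mn ^ d := by
      rw [hArec n]
      calc v (P.eval (A n) + l * B n) ≤ v (P.eval (A n)) + v (l * B n) := v.add_le _ _
        _ ≤ C * max 1 (v (A n)) ^ d + L * Mn := by
            refine add_le_add ((le_max_left _ _).trans (hup (A n))) ?_
            rw [v.map_mul]
            exact mul_le_mul hl hvB (v.nonneg _) hL0
        _ ≤ C * Mn ^ d + L * Mn ^ d := by
            have hmax : max 1 (v (A n)) ≤ Mn := max_le hMn1le hvA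
            have hmax0 : (0:ℝ) ≤ max 1 (v (A n)) := zero_le_one.trans (le_max_left _ _)
            refine add_le_add ?_ (mul_le_mul_of_nonneg_left hself hL0)
            exact mul_le_mul_of_nonneg_left (pow_le_pow_left₀ hmax0 hmax d) (by linarith)
        _ = (C + L) * Mn ^ d := by ring
    have hupB : v (B (n+1)) ≤ (C + L) * Mn ^ d := by
      rw [hBrec n]
      calc v (Q.eval (B n) + m * A n) ≤ v (Q.eval (B n)) + v (m * A n) := v.add_le _ _
        _ ≤ C * max 1 (v (B n)) ^ d + L * Mn := by
            refine add_le_add ((le_max_right _ _).trans (hup (B n))) ?_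
            rw [v.map_mul]
            exact mul_le_mul hm hvA (v.nonneg _) hL0
        _ ≤ C * Mn ^ d + L * Mn ^ d := by
            have hmax : max 1 (v (B n)) ≤ Mn := max_le hMn1le hvB
            have hmax0 : (0:ℝ) ≤ max 1 (v (B n)) := zero_le_one.trans (le_max_left _ _)
            refine add_le_add ?_ (mul_le_mul_of_nonneg_left hself hL0)
            exact mul_le_mul_of_nonneg_left (pow_le_pow_left₀ hmax0 hmax d) (by linarith)
        _ = (C + L) * Mn ^ d := by ring
    have hup1 : Mn1 ≤ (C + L) * Mn ^ d := by
      have h1 : (1:ℝ) ≤ (C + L) * Mn ^ d := by nlinarith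
      exact max_le (max_le hupA hupB) h1
    refine ⟨?_, (div_le_iff₀ hMndpos).mpr hup1⟩
    -- lower bound
    by_cases hcase : Mn ≤ L7
    · have h1 : Mn ^ d ≤ L7 ^ d := pow_le_pow_left₀ hMnpos.le hcase d
      have hMn1one : (1:ℝ) ≤ Mn1 := le_max_right _ _
      refine (min_le_left _ _).trans ?_
      calc (L7 ^ d)⁻¹ ≤ (Mn ^ d)⁻¹ := inv_anti₀ hMndpos h1
        _ = 1 / Mn ^ d := (one_div _).symm
        _ ≤ Mn1 / Mn ^ d := by gcongr
    · push_neg at hcase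
      have hone : (1:ℝ) ≤ max (v (A n)) (v (B n)) := by
        by_contra h
        push_neg at h
        have : Mn = 1 := max_eq_right h.le
        linarith
      have hmaxAB : max (v (A n)) (v (B n)) = Mn := (max_eq_left hone).symm
      have hML7 : 2 * L / δ ≤ Mn := (le_max_right L6 _).trans hcase.le
      have hkey : δ / 2 * Mn ^ d ≤ Mn1 := by
        rcases le_total (v (B n)) (v (A n)) with hAB | hAB
        · have hAeq : v (A n) = Mn := by rw [← hmaxAB, max_eq_left hAB]
          have hA6 : L6 ≤ v (A n) := by rw [hAeq]; exact (le_max_left _ _).trans hcase.le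
          have hp : δ * Mn ^ d ≤ v (P.eval (A n)) := by
            rw [← hAeq]
            exact (hlow (A n) hA6).trans (min_le_left _ _)
          have hz : v (P.eval (A n)) ≤ v (A (n+1)) + L * Mn := by
            have hPA : P.eval (A n) = A (n+1) + -(l * B n) := by rw [hArec n]; ring
            rw [hPA]
            refine (v.add_le _ _).trans ?_
            rw [v.map_neg, v.map_mul]
            exact add_le_add_right (mul_le_mul hl hvB (v.nonneg _) hL0) _
          exact (stmt9_aux hMn1le hML7 hδ hL0 h2d hp hz).trans
            (le_max_of_le_left (le_max_left _ _))
        · have hBeq : v (B n) = Mn := by rw [← hmaxAB, max_eq_right hAB]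
          have hB6 : L6 ≤ v (B n) := by rw [hBeq]; exact (le_max_left _ _).trans hcase.le
          have hp : δ * Mn ^ d ≤ v (Q.eval (B n)) := by
            rw [← hBeq]
            exact (hlow (B n) hB6).trans (min_le_right _ _)
          have hz : v (Q.eval (B n)) ≤ v (B (n+1)) + L * Mn := by
            have hQB : Q.eval (B n) = B (n+1) + -(m * A n) := by rw [hBrec n]; ring
            rw [hQB]
            refine (v.add_le _ _).trans ?_
            rw [v.map_neg, v.map_mul]
            exact add_le_add_right (mul_le_mul hm hvA (v.nonneg _) hL0) _
          exact (stmt9_aux hMn1le hML7 hδ hL0 h2d hp hz).trans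
            (le_max_of_le_left (le_max_right _ _))
      exact (min_le_right _ _).trans ((le_div_iff₀ hMndpos).mpr hkey)
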